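/- Let X be a locally convex topological vector space over ℝ, Y a T₁-space, and f : X → Y a function such that for every connected set C ⊆ X whose interior is connected and dense in C, the image f(C) is connected. Then f is strongly W-Gibson: for every open convex set G ⊆ X, every x in the closure of G, and every neighborhood U of x, f(x) lies in the closure of f(G ∩ U). -/

import Mathlib

theorem stmt5 {X Y : Type*} [AddCommGroup X] [Module ℝ X] [TopologicalSpace X]
    [IsTopologicalAddGroup X] [ContinuousSMul ℝ X] [LocallyConvexSpace ℝ X]
    [TopologicalSpace Y] [T1Space Y] (f : X → Y)
    (h : ∀ C : Set X, IsConnected C → IsConnected (interior C) →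
      C ⊆ closure (interior C) → IsConnected (f '' C)) :
    ∀ G : Set X, IsOpen G → Convex ℝ G → ∀ x ∈ closure G, ∀ U ∈ nhds x,
      f x ∈ closure (f '' (G ∩ U)) := by
  intro G hGo hGc x hx U hU
  -- get an open convex neighborhood W of x inside U
  obtain ⟨S, ⟨hS, hSc⟩, hSU⟩ := ((LocallyConvexSpace.convex_basis (𝕜 := ℝ) x).mem_iff.mp hU)
  set W := interior S with hW
  have hWo : IsOpen W := isOpen_interior
  have hWc : Convex ℝ W := hSc.interior
  have hxW : x ∈ W := mem_interior_iff_mem_nhds.mpr hS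
  have hWU : W ⊆ U := interior_subset.trans hSU
  -- x ∈ closure (G ∩ W)
  have hxcl : x ∈ closure (G ∩ W) := by
    have := hWo.inter_closure (t := G) ⟨hxW, hx⟩
    simpa [Set.inter_comm] using this
  have hGW_o : IsOpen (G ∩ W) := hGo.inter hWo
  have hGW_c : Convex ℝ (G ∩ W) := hGc.inter hWc
  have hGW_ne : (G ∩ W).Nonempty := by
    by_contra hne
    rw [Set.not_nonempty_iff_eq_empty] at hne
    simp [hne] at hxcl
  have hGW_pc : IsPreconnected (G ∩ W) := hGW_c.isPreconnected
  -- the set C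
  set C : Set X := insert x (G ∩ W) with hC
  have hsubC : G ∩ W ⊆ C := Set.subset_insert _ _
  have hCcl : C ⊆ closure (G ∩ W) := by
    intro y hy
    rcases hy with rfl | hy
    · exact hxcl
    · exact subset_closure hy
  have hintC : G ∩ W ⊆ interior C := hGW_o.subset_interior_iff.mpr hsubC
  have hCconn : IsConnected C := ⟨⟨x, Set.mem_insert _ _⟩,
    hGW_pc.subset_closure hsubC hCcl⟩
  have hintconn : IsConnected (interior C) := ⟨hGW_ne.mono hintC,
    hGW_pc.subset_closure hintC ((interior_subset).trans hCcl)⟩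
  have hCclint : C ⊆ closure (interior C) :=
    hCcl.trans (closure_mono hintC)
  have himg : IsConnected (f '' C) := h C hCconn hintconn hCclint
  -- conclude
  have hmono : f '' (G ∩ W) ⊆ f '' (G ∩ U) :=
    Set.image_mono (Set.inter_subset_inter_right _ hWU)
  by_contra hfx
  have hfx' : f x ∉ closure (f '' (G ∩ W)) := fun hh =>
    hfx (closure_mono hmono hh)
  -- separate {f x} from f '' (G ∩ W)
  have hfxB : f x ∉ f '' (G ∩ W) := fun hh => hfx' (subset_closure hh)
  have hpc := himg.isPreconnected
  have := hpc (closure (f '' (G ∩ W)))ᶜ {f x}ᶜ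
    isClosed_closure.isOpen_compl isClosed_singleton.isOpen_compl
    (by
      intro y hy
      rcases hy with ⟨z, hz, rfl⟩
      rcases hz with rfl | hz
      · exact Or.inl hfx'
      · exact Or.inr (fun he => hfxB (he ▸ Set.mem_image_of_mem f hz)))
    ⟨f x, Set.mem_image_of_mem f (Set.mem_insert _ _), hfx'⟩
    (by
      obtain ⟨z, hz⟩ := hGW_ne
      exact ⟨f z, Set.mem_image_of_mem f (hsubC hz),
        fun he => hfxB (he ▸ Set.mem_image_of_mem f hz)⟩)
  obtain ⟨y, hyC, hy1, hy2⟩ := this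
  rcases hyC with ⟨z, hz, rfl⟩
  rcases hz with rfl | hz
  · exact hy2 rfl
  · exact hy1 (subset_closure (Set.mem_image_of_mem f hz))
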